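/- arXiv:1401.4728 — 2 statements merged into one kernel-verified Lean document; each statement's English description precedes it below -/
import Mathlib

section
/- Let k be a formally real pythagorean field such that the group k^×/(k^×)² is finite of order 2^n. Then the number x(k) of orderings of k satisfies n ≤ x(k) ≤ 2^{n−1}. -/
open scoped Pointwise

/-- An ordering of a field `k`: a subset `P` closed under addition and multiplication with
`P ∩ (−P) = ∅` and `P ∪ (−P) = k ∖ {0}`. -/
def IsFieldOrdering {k : Type} [Field k] (P : Set k) : Prop :=
  (∀ a ∈ P, ∀ b ∈ P, a + b ∈ P) ∧ (∀ a ∈ P, ∀ b ∈ P, a * b ∈ P) ∧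
    P ∩ (-P) = ∅ ∧ P ∪ (-P) = {0}ᶜ

section Aux

variable {k : Type} [Field k]

/-- A preordering of a field: contains all squares, closed under `+` and `*`, omits `-1`. -/
def IsPreordering (T : Set k) : Prop :=
  (∀ c : k, c ^ 2 ∈ T) ∧ (∀ x ∈ T, ∀ y ∈ T, x + y ∈ T) ∧
    (∀ x ∈ T, ∀ y ∈ T, x * y ∈ T) ∧ (-1 : k) ∉ T

lemma IsPreordering.not_both {T : Set k} (hT : IsPreordering T) {x : k} (hx : x ≠ 0)
    (h1 : x ∈ T) (h2 : -x ∈ T) : False := by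
  obtain ⟨hsq, hadd, hmul, hneg⟩ := hT
  apply hneg
  have : (-1 : k) = (x * -x) * (x⁻¹) ^ 2 := by
    field_simp
  rw [this]
  exact hmul _ (hmul _ h1 _ h2) _ (hsq x⁻¹)

lemma IsPreordering.extend {T : Set k} (hT : IsPreordering T) {x : k} (hx : -x ∉ T) :
    IsPreordering {y | ∃ s ∈ T, ∃ t ∈ T, y = s + x * t} ∧
      T ⊆ {y | ∃ s ∈ T, ∃ t ∈ T, y = s + x * t} ∧
      x ∈ {y | ∃ s ∈ T, ∃ t ∈ T, y = s + x * t} := by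
  obtain ⟨hsq, hadd, hmul, hneg⟩ := hT
  have h0 : (0 : k) ∈ T := by simpa using hsq 0
  have h1 : (1 : k) ∈ T := by simpa using hsq 1
  refine ⟨⟨?_, ?_, ?_, ?_⟩, fun s hs => ⟨s, hs, 0, h0, by ring⟩, ⟨0, h0, 1, h1, by ring⟩⟩
  · intro c; exact ⟨c ^ 2, hsq c, 0, h0, by ring⟩
  · rintro _ ⟨s1, hs1, t1, ht1, rfl⟩ _ ⟨s2, hs2, t2, ht2, rfl⟩
    exact ⟨s1 + s2, hadd _ hs1 _ hs2, t1 + t2, hadd _ ht1 _ ht2, by ring⟩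
  · rintro _ ⟨s1, hs1, t1, ht1, rfl⟩ _ ⟨s2, hs2, t2, ht2, rfl⟩
    refine ⟨s1 * s2 + x ^ 2 * (t1 * t2),
      hadd _ (hmul _ hs1 _ hs2) _ (hmul _ (hsq x) _ (hmul _ ht1 _ ht2)),
      s1 * t2 + s2 * t1, hadd _ (hmul _ hs1 _ ht2) _ (hmul _ hs2 _ ht1), by ring⟩
  · rintro ⟨s, hs, t, ht, hst⟩
    by_cases htz : t = 0
    · subst htz
      apply hneg
      have : (-1 : k) = s := by rw [hst]; ring
      rwa [this]
    · apply hx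
      have key : -x = ((1 + s) * t) * (t⁻¹) ^ 2 := by
        have h' : (1 + s) = -x * t := by
          linear_combination -hst
        rw [h']
        field_simp
      rw [key]
      exact hmul _ (hmul _ (hadd _ h1 _ hs) _ ht) _ (hsq t⁻¹)

lemma maximal_preordering_isFieldOrdering {T : Set k}
    (hmax : Maximal IsPreordering T) : IsFieldOrdering (T \ {0}) := by
  obtain ⟨hpre, hm⟩ := hmax
  have htot : ∀ x : k, x ∈ T ∨ -x ∈ T := by
    intro x
    by_cases hnx : -x ∈ T
    · exact Or.inr hnx
    · left
      obtain ⟨hpre', hsub, hxmem⟩ := hpre.extend hnx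
      exact hm hpre' hsub hxmem
  obtain ⟨hsq, hadd, hmul, hneg⟩ := hpre
  have hpre' : IsPreordering T := ⟨hsq, hadd, hmul, hneg⟩
  refine ⟨?_, ?_, ?_, ?_⟩
  · rintro a ⟨haT, ha0⟩ b ⟨hbT, hb0⟩
    refine ⟨hadd _ haT _ hbT, ?_⟩
    intro h
    rw [Set.mem_singleton_iff] at h
    have hba : b = -a := by linear_combination h
    exact hpre'.not_both (by simpa using ha0) haT (hba ▸ hbT)
  · rintro a ⟨haT, ha0⟩ b ⟨hbT, hb0⟩
    exact ⟨hmul _ haT _ hbT, by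
      simp only [Set.mem_singleton_iff] at *
      exact mul_ne_zero ha0 hb0⟩
  · rw [Set.eq_empty_iff_forall_notMem]
    rintro x ⟨⟨hxT, hx0⟩, hxneg⟩
    rw [Set.mem_neg] at hxneg
    obtain ⟨hnxT, _⟩ := hxneg
    exact hpre'.not_both (by simpa using hx0) hxT hnxT
  · ext x
    simp only [Set.mem_union, Set.mem_neg, Set.mem_diff, Set.mem_singleton_iff,
      Set.mem_compl_iff]
    constructor
    · rintro (⟨_, hx0⟩ | ⟨_, hx0⟩)
      · exact hx0
      · intro h; apply hx0; rw [h]; ring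
    · intro hx0
      rcases htot x with h | h
      · exact Or.inl ⟨h, hx0⟩
      · exact Or.inr ⟨h, by simpa using hx0⟩

lemma isSumSq_eq_sq (hpyth : ∀ a b : k, ∃ c : k, a ^ 2 + b ^ 2 = c ^ 2) {x : k}
    (hx : IsSumSq x) : ∃ c : k, x = c ^ 2 := by
  induction hx with
  | zero => exact ⟨0, by simp⟩
  | sq_add a _ ih =>
    obtain ⟨c, hc⟩ := ih
    obtain ⟨e, he⟩ := hpyth a c
    exact ⟨e, by rw [← he, hc]; ring⟩

lemma exists_ordering_not_mem (hreal : ¬ IsSumSq (-1 : k))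
    (hpyth : ∀ a b : k, ∃ c : k, a ^ 2 + b ^ 2 = c ^ 2)
    {a : k} (ha : a ≠ 0) (hna : ¬ ∃ c : k, a = c ^ 2) :
    ∃ P : Set k, IsFieldOrdering P ∧ a ∉ P := by
  set T₀ : Set k := {y : k | ∃ c d : k, y = c ^ 2 - a * d ^ 2} with hT₀def
  have hpre0 : IsPreordering T₀ := by
    refine ⟨?_, ?_, ?_, ?_⟩
    · intro c; exact ⟨c, 0, by ring⟩
    · rintro _ ⟨c1, d1, rfl⟩ _ ⟨c2, d2, rfl⟩
      obtain ⟨e, he⟩ := hpyth c1 c2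
      obtain ⟨f, hf⟩ := hpyth d1 d2
      exact ⟨e, f, by rw [← he, ← hf]; ring⟩
    · rintro _ ⟨c1, d1, rfl⟩ _ ⟨c2, d2, rfl⟩
      obtain ⟨e, he⟩ := hpyth (c1 * c2) (a * (d1 * d2))
      obtain ⟨f, hf⟩ := hpyth (c1 * d2) (d1 * c2)
      exact ⟨e, f, by rw [← he, ← hf]; ring⟩
    · rintro ⟨c, d, hcd⟩
      by_cases hd : d = 0
      · subst hd
        apply hreal
        have : (-1 : k) = c * c + 0 := by rw [hcd]; ring
        rw [this]
        exact IsSumSq.sq_add c IsSumSq.zero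
      · apply hna
        obtain ⟨e, he⟩ := hpyth c 1
        refine ⟨e * d⁻¹, ?_⟩
        have had : a * d ^ 2 = e ^ 2 := by linear_combination hcd + he
        calc a = a * d ^ 2 * (d⁻¹) ^ 2 := by
                  rw [mul_assoc, ← mul_pow, mul_inv_cancel₀ hd, one_pow, mul_one]
          _ = e ^ 2 * (d⁻¹) ^ 2 := by rw [had]
          _ = (e * d⁻¹) ^ 2 := (mul_pow _ _ _).symm
  have hchain_ub : ∀ c ⊆ {T : Set k | IsPreordering T}, IsChain (· ⊆ ·) c → c.Nonempty →
      ∃ ub ∈ {T : Set k | IsPreordering T}, ∀ s ∈ c, s ⊆ ub := by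
    intro c hc hchain hne
    refine ⟨⋃₀ c, ⟨?_, ?_, ?_, ?_⟩, fun s hs => Set.subset_sUnion_of_mem hs⟩
    · intro x
      obtain ⟨t, ht⟩ := hne
      exact Set.mem_sUnion.2 ⟨t, ht, (hc ht).1 x⟩
    · rintro x hx y hy
      obtain ⟨t1, ht1, hxt1⟩ := hx
      obtain ⟨t2, ht2, hyt2⟩ := hy
      rcases hchain.total ht1 ht2 with h | h
      · exact Set.mem_sUnion.2 ⟨t2, ht2, (hc ht2).2.1 _ (h hxt1) _ hyt2⟩
      · exact Set.mem_sUnion.2 ⟨t1, ht1, (hc ht1).2.1 _ hxt1 _ (h hyt2)⟩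
    · rintro x hx y hy
      obtain ⟨t1, ht1, hxt1⟩ := hx
      obtain ⟨t2, ht2, hyt2⟩ := hy
      rcases hchain.total ht1 ht2 with h | h
      · exact Set.mem_sUnion.2 ⟨t2, ht2, (hc ht2).2.2.1 _ (h hxt1) _ hyt2⟩
      · exact Set.mem_sUnion.2 ⟨t1, ht1, (hc ht1).2.2.1 _ hxt1 _ (h hyt2)⟩
    · rintro ⟨t, ht, hmem⟩
      exact (hc ht).2.2.2 hmem
  obtain ⟨T, hsub, hmaxT⟩ := zorn_subset_nonempty {T : Set k | IsPreordering T} hchain_ub T₀ hpre0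
  refine ⟨T \ {0}, maximal_preordering_isFieldOrdering hmaxT, ?_⟩
  rintro ⟨haT, _⟩
  have hnaT : -a ∈ T := hsub ⟨0, 1, by ring⟩
  exact hmaxT.1.not_both ha haT hnaT

namespace IsFieldOrdering

variable {P : Set k} (hP : IsFieldOrdering P)

include hP

lemma zero_not_mem : (0 : k) ∉ P := by
  intro h
  have := hP.2.2.2
  have h0 : (0 : k) ∈ P ∪ (-P) := Or.inl h
  rw [this] at h0
  exact h0 rfl

lemma mem_or_neg_mem {x : k} (hx : x ≠ 0) : x ∈ P ∨ -x ∈ P := by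
  have := hP.2.2.2
  have hx' : x ∈ P ∪ (-P) := by rw [this]; exact hx
  rcases hx' with h | h
  · exact Or.inl h
  · exact Or.inr (Set.mem_neg.mp h)

lemma not_both_mem {x : k} (h1 : x ∈ P) (h2 : -x ∈ P) : False := by
  have := hP.2.2.1
  have : x ∈ P ∩ (-P) := ⟨h1, Set.mem_neg.mpr h2⟩
  rw [hP.2.2.1] at this
  exact this

lemma not_mem_iff {x : k} (hx : x ≠ 0) : x ∉ P ↔ -x ∈ P := by
  constructor
  · intro h
    rcases hP.mem_or_neg_mem hx with h' | h'
    · exact absurd h' h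
    · exact h'
  · intro h h'
    exact hP.not_both_mem h' h

lemma one_mem : (1 : k) ∈ P := by
  rcases hP.mem_or_neg_mem (one_ne_zero (α := k)) with h | h
  · exact h
  · exfalso
    have h1 : (-1 : k) * (-1 : k) ∈ P := hP.2.1 _ h _ h
    rw [neg_mul_neg, one_mul] at h1
    exact hP.not_both_mem h1 h

lemma neg_one_not_mem : (-1 : k) ∉ P := fun h => hP.not_both_mem hP.one_mem h

lemma mul_mem_iff {x y : k} (hx : x ≠ 0) (hy : y ≠ 0) :
    x * y ∈ P ↔ (x ∈ P ↔ y ∈ P) := by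
  by_cases hxP : x ∈ P <;> by_cases hyP : y ∈ P
  · exact iff_of_true (hP.2.1 _ hxP _ hyP) (iff_of_true hxP hyP)
  · refine iff_of_false ?_ (by tauto)
    have hneg : -(x * y) ∈ P := by
      have := hP.2.1 _ hxP _ ((hP.not_mem_iff hy).mp hyP)
      rwa [mul_neg] at this
    exact fun h => hP.not_both_mem h hneg
  · refine iff_of_false ?_ (by tauto)
    have hneg : -(x * y) ∈ P := by
      have := hP.2.1 _ ((hP.not_mem_iff hx).mp hxP) _ hyP
      rwa [neg_mul] at this
    exact fun h => hP.not_both_mem h hneg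
  · refine iff_of_true ?_ (by tauto)
    have := hP.2.1 _ ((hP.not_mem_iff hx).mp hxP) _ ((hP.not_mem_iff hy).mp hyP)
    rwa [neg_mul_neg] at this

open Classical in
/-- The sign character on units associated to an ordering. -/
noncomputable def sgn (hP : IsFieldOrdering P) : kˣ →* ℤˣ where
  toFun u := if (u : k) ∈ P then 1 else -1
  map_one' := by simp [hP.one_mem]
  map_mul' u v := by
    have key : ((u : k) * (v : k)) ∈ P ↔ (((u : k) ∈ P) ↔ ((v : k) ∈ P)) :=
      hP.mul_mem_iff u.ne_zero v.ne_zero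
    by_cases h1 : (u : k) ∈ P <;> by_cases h2 : (v : k) ∈ P <;>
      simp [Units.val_mul, key, h1, h2]

open Classical in
lemma sgn_eq_one_iff {u : kˣ} : hP.sgn u = 1 ↔ (u : k) ∈ P := by
  unfold sgn
  by_cases h : (u : k) ∈ P <;> simp [h]

open Classical in
lemma sgn_eq_neg_one_of_not_mem {u : kˣ} (h : (u : k) ∉ P) : hP.sgn u = -1 := by
  unfold sgn
  simp [h]

/-- The character on the square-class group associated to an ordering. -/
noncomputable def char (hP : IsFieldOrdering P) :
    (kˣ ⧸ (powMonoidHom 2 : kˣ →* kˣ).range) →* ℤˣ :=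
  QuotientGroup.lift _ hP.sgn (by
    rintro x ⟨u, rfl⟩
    rw [MonoidHom.mem_ker]
    show hP.sgn (u ^ 2) = 1
    rw [map_pow, Int.units_sq])

lemma char_mk (u : kˣ) : hP.char (QuotientGroup.mk u) = hP.sgn u := rfl

lemma char_neg_one : hP.char (QuotientGroup.mk (-1 : kˣ)) = -1 := by
  rw [hP.char_mk]
  apply hP.sgn_eq_neg_one_of_not_mem
  simpa using hP.neg_one_not_mem

end IsFieldOrdering

end Aux

/-- The explicit additive equivalence between `Additive ℤˣ` and `ZMod 2`. -/
noncomputable def e2 : Additive ℤˣ ≃+ ZMod 2 where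
  toFun g := if g.toMul = 1 then 0 else 1
  invFun x := Additive.ofMul (if x = 0 then (1 : ℤˣ) else -1)
  left_inv g := by
    rcases Int.units_eq_one_or g.toMul with h | h
    · have h0 : (if g.toMul = 1 then (0 : ZMod 2) else 1) = 0 := if_pos h
      show Additive.ofMul (if (if g.toMul = 1 then (0 : ZMod 2) else 1) = 0
        then (1 : ℤˣ) else -1) = g
      rw [h0, if_pos rfl]
      exact congrArg Additive.ofMul h.symm
    · have h0 : (if g.toMul = 1 then (0 : ZMod 2) else 1) = 1 :=
        if_neg (by rw [h]; decide)
      show Additive.ofMul (if (if g.toMul = 1 then (0 : ZMod 2) else 1) = 0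
        then (1 : ℤˣ) else -1) = g
      rw [h0, if_neg (by decide)]
      exact congrArg Additive.ofMul h.symm
  right_inv x := by
    fin_cases x <;> rfl
  map_add' a b := by
    show (if (a.toMul * b.toMul) = 1 then (0 : ZMod 2) else 1) =
      (if a.toMul = 1 then (0 : ZMod 2) else 1) + (if b.toMul = 1 then (0 : ZMod 2) else 1)
    rcases Int.units_eq_one_or a.toMul with h1 | h1 <;>
      rcases Int.units_eq_one_or b.toMul with h2 | h2 <;>
        rw [h1, h2] <;> decide

section Counting

variable {G : Type} [CommGroup G] [Finite G] (h2 : ∀ g : G, g ^ 2 = 1)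

lemma counting_aux (h2 : ∀ g : G, g ^ 2 = 1) :
    Nat.card (G →* ℤˣ) = Nat.card G ∧
      (∀ g₀ : G, g₀ ≠ 1 → ∃ φ : G →* ℤˣ, φ g₀ = -1) := by
  letI : Module (ZMod 2) (Additive G) := AddCommGroup.zmodModule (n := 2) (by
    intro x
    apply Additive.toMul.injective
    simpa [toMul_nsmul] using h2 x.toMul)
  let E : (G →* ℤˣ) ≃ Module.Dual (ZMod 2) (Additive G) :=
  { toFun := fun φ => (e2.toAddMonoidHom.comp (MonoidHom.toAdditive φ)).toZModLinearMap 2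
    invFun := fun ψ => MonoidHom.toAdditive.symm (e2.symm.toAddMonoidHom.comp ψ.toAddMonoidHom)
    left_inv := fun φ => MonoidHom.ext fun g =>
      congrArg Additive.toMul (e2.symm_apply_apply (Additive.ofMul (φ g)))
    right_inv := fun ψ => LinearMap.ext fun x => e2.apply_symm_apply (ψ x) }
  haveI : Finite (Module.Dual (ZMod 2) (Additive G)) :=
    Finite.of_injective (β := Additive G → ZMod 2)
      (fun f : Module.Dual (ZMod 2) (Additive G) => ⇑f) DFunLike.coe_injective
  haveI := Fintype.ofFinite (Additive G)
  haveI := Fintype.ofFinite (Module.Dual (ZMod 2) (Additive G))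
  constructor
  · calc Nat.card (G →* ℤˣ) = Nat.card (Module.Dual (ZMod 2) (Additive G)) := Nat.card_congr E
      _ = Fintype.card (Module.Dual (ZMod 2) (Additive G)) := Nat.card_eq_fintype_card
      _ = Fintype.card (ZMod 2) ^ Module.finrank (ZMod 2) (Module.Dual (ZMod 2) (Additive G)) :=
          Module.card_eq_pow_finrank
      _ = Fintype.card (ZMod 2) ^ Module.finrank (ZMod 2) (Additive G) := by
          rw [Subspace.dual_finrank_eq]
      _ = Fintype.card (Additive G) := Module.card_eq_pow_finrank.symm
      _ = Nat.card G := by rw [← Nat.card_eq_fintype_card]; exact Nat.card_congr Additive.toMul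
  · intro g₀ hg₀
    have ha₀ : (Additive.ofMul g₀ : Additive G) ≠ 0 := by
      simpa using hg₀
    have hψ : ∃ ψ : Module.Dual (ZMod 2) (Additive G), ψ (Additive.ofMul g₀) ≠ 0 := by
      by_contra h
      push_neg at h
      exact ha₀ ((Module.forall_dual_apply_eq_zero_iff (ZMod 2) _).mp h)
    obtain ⟨ψ, hψ⟩ := hψ
    refine ⟨E.symm ψ, ?_⟩
    have hval : e2 (Additive.ofMul ((E.symm ψ) g₀)) = ψ (Additive.ofMul g₀) :=
      LinearMap.congr_fun (E.apply_symm_apply ψ) (Additive.ofMul g₀)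
    rcases Int.units_eq_one_or ((E.symm ψ) g₀) with h | h
    · exfalso
      apply hψ
      rw [← hval, h]
      show e2 0 = 0
      exact map_zero e2
    · exact h

end Counting

/-- Let `k` be a formally real pythagorean field with `k^×/(k^×)²` finite of order `2^n`.
Then the number of orderings `x(k)` of `k` satisfies `n ≤ x(k) ≤ 2^(n-1)`. -/
theorem stmt_1 {k : Type} [Field k] (n : ℕ)
    (hreal : ¬ IsSumSq (-1 : k))
    (hpyth : ∀ a b : k, ∃ c : k, a ^ 2 + b ^ 2 = c ^ 2)
    (hcard : Nat.card (kˣ ⧸ (powMonoidHom 2 : kˣ →* kˣ).range) = 2 ^ n) :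
    n ≤ Nat.card {P : Set k // IsFieldOrdering P} ∧
      Nat.card {P : Set k // IsFieldOrdering P} ≤ 2 ^ (n - 1) := by
  classical
  set G := kˣ ⧸ (powMonoidHom 2 : kˣ →* kˣ).range with hGdef
  haveI hGfin : Finite G := by
    have : Nat.card G ≠ 0 := by rw [hcard]; positivity
    exact (Nat.card_ne_zero.mp this).2
  have h2 : ∀ g : G, g ^ 2 = 1 := by
    intro g
    obtain ⟨u, rfl⟩ := QuotientGroup.mk_surjective g
    rw [← QuotientGroup.mk_pow, QuotientGroup.eq_one_iff]
    exact ⟨u, rfl⟩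
  have hg₀ : (QuotientGroup.mk (-1 : kˣ) : G) ≠ 1 := by
    rw [Ne, QuotientGroup.eq_one_iff]
    rintro ⟨v, hv⟩
    apply hreal
    have hv2 : ((v : k)) ^ 2 = -1 := by
      have : ((v ^ 2 : kˣ) : k) = ((-1 : kˣ) : k) := by
        exact_mod_cast congrArg Units.val hv
      simpa using this
    have : (-1 : k) = (v : k) * (v : k) + 0 := by rw [← hv2]; ring
    rw [this]
    exact IsSumSq.sq_add _ IsSumSq.zero
  obtain ⟨hcardHom, hsep⟩ := counting_aux (G := G) h2
  obtain ⟨φ₀, hφ₀⟩ := hsep _ hg₀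
  haveI : Finite (G →* ℤˣ) := by
    have : Nat.card (G →* ℤˣ) ≠ 0 := by rw [hcardHom, hcard]; positivity
    exact (Nat.card_ne_zero.mp this).2
  -- the subtype of characters sending -1 to -1 has cardinality 2^(n-1)
  have hn1 : 1 ≤ n := by
    have hlt : 1 < Nat.card G := by
      haveI : Nontrivial G := nontrivial_of_ne _ _ hg₀
      exact Finite.one_lt_card
    rw [hcard] at hlt
    by_contra h
    interval_cases n
    · simp at hlt
  have hcardS : Nat.card {φ : G →* ℤˣ // φ (QuotientGroup.mk (-1 : kˣ)) = -1} = 2 ^ (n - 1) := by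
    set p : (G →* ℤˣ) → Prop := fun φ => φ (QuotientGroup.mk (-1 : kˣ)) = -1 with hp
    have hφ₀sq : φ₀ * φ₀ = 1 := MonoidHom.ext fun g => Int.units_mul_self (φ₀ g)
    have hEquiv : {φ : G →* ℤˣ // p φ} ≃ {φ : G →* ℤˣ // ¬ p φ} :=
    { toFun := fun φ => ⟨φ₀ * φ.1, by
        have : (φ₀ * φ.1) (QuotientGroup.mk (-1 : kˣ)) = -1 * -1 := by
          rw [MonoidHom.mul_apply, hφ₀, φ.2]
        simp only [hp, this]
        decide⟩
      invFun := fun φ => ⟨φ₀ * φ.1, by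
        have h1 : φ.1 (QuotientGroup.mk (-1 : kˣ)) = 1 := by
          rcases Int.units_eq_one_or (φ.1 (QuotientGroup.mk (-1 : kˣ))) with h | h
          · exact h
          · exact absurd h φ.2
        show (φ₀ * φ.1) (QuotientGroup.mk (-1 : kˣ)) = -1
        rw [MonoidHom.mul_apply, hφ₀, h1, mul_one]⟩
      left_inv := fun φ => by
        apply Subtype.ext
        show φ₀ * (φ₀ * φ.1) = φ.1
        rw [← mul_assoc, hφ₀sq, one_mul]
      right_inv := fun φ => by
        apply Subtype.ext
        show φ₀ * (φ₀ * φ.1) = φ.1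
        rw [← mul_assoc, hφ₀sq, one_mul] }
    have hsum : Nat.card {φ : G →* ℤˣ // p φ} + Nat.card {φ : G →* ℤˣ // ¬ p φ} = 2 ^ n := by
      rw [← Nat.card_sum, Nat.card_congr (Equiv.sumCompl p), hcardHom, hcard]
    rw [← Nat.card_congr hEquiv] at hsum
    have h2n : 2 ^ n = 2 * 2 ^ (n - 1) := by
      rw [← pow_succ']
      congr 1
      omega
    have h2c : 2 * Nat.card {φ : G →* ℤˣ // p φ} = 2 * 2 ^ (n - 1) := by
      rw [← h2n, ← hsum]; ring
    exact Nat.eq_of_mul_eq_mul_left (by norm_num) h2c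
  -- injective map from orderings to such characters
  have hΦinj : Function.Injective
      (fun Q : {P : Set k // IsFieldOrdering P} =>
        (⟨Q.2.char, Q.2.char_neg_one⟩ :
          {φ : G →* ℤˣ // φ (QuotientGroup.mk (-1 : kˣ)) = -1})) := by
    rintro ⟨P, hP⟩ ⟨Q, hQ⟩ h
    have hchar : hP.char = hQ.char := congrArg Subtype.val h
    apply Subtype.ext
    have key : ∀ (R : Set k) (hR : IsFieldOrdering R) (x : k) (hx : x ≠ 0),
        x ∈ R ↔ hR.char (QuotientGroup.mk (Units.mk0 x hx)) = 1 := by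
      intro R hR x hx
      rw [hR.char_mk, hR.sgn_eq_one_iff]
      rfl
    ext x
    by_cases hx : x = 0
    · subst hx
      simp only [hP.zero_not_mem, hQ.zero_not_mem]
    · rw [key P hP x hx, key Q hQ x hx, hchar]
  haveI : Finite {φ : G →* ℤˣ // φ (QuotientGroup.mk (-1 : kˣ)) = -1} :=
    Subtype.finite
  have hupper : Nat.card {P : Set k // IsFieldOrdering P} ≤ 2 ^ (n - 1) := by
    rw [← hcardS]
    exact Nat.card_le_card_of_injective _ hΦinj
  haveI hXfin : Finite {P : Set k // IsFieldOrdering P} :=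
    Finite.of_injective _ hΦinj
  -- lower bound
  have hΨ : ∃ Ψ : G →* ({P : Set k // IsFieldOrdering P} → ℤˣ), Function.Injective Ψ := by
    refine ⟨{ toFun := fun g Q => Q.2.char g
              map_one' := by funext Q; simp
              map_mul' := fun g h => by funext Q; simp }, ?_⟩
    rw [injective_iff_map_eq_one]
    intro g hg
    obtain ⟨u, rfl⟩ := QuotientGroup.mk_surjective g
    rw [QuotientGroup.eq_one_iff]
    have hsq : ∃ c : k, (u : k) = c ^ 2 := by
      by_contra hns
      obtain ⟨P, hP, hnot⟩ := exists_ordering_not_mem hreal hpyth u.ne_zero hns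
      have hone : hP.char (QuotientGroup.mk u) = 1 := congrFun hg ⟨P, hP⟩
      rw [hP.char_mk, hP.sgn_eq_neg_one_of_not_mem hnot] at hone
      exact absurd hone (by decide)
    obtain ⟨c, hc⟩ := hsq
    have hc0 : c ≠ 0 := by
      intro h
      apply u.ne_zero
      rw [hc, h]; ring
    refine ⟨Units.mk0 c hc0, ?_⟩
    apply Units.ext
    show ((Units.mk0 c hc0) ^ 2 : kˣ).val = (u : k)
    rw [Units.val_pow_eq_pow_val, Units.val_mk0, ← hc]
  obtain ⟨Ψ, hΨinj⟩ := hΨ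
  have hcard2 : Nat.card ℤˣ = 2 := by
    have : Nat.card ℤˣ = Nat.card (Additive ℤˣ) := Nat.card_congr Additive.ofMul
    rw [this, Nat.card_congr e2.toEquiv, Nat.card_eq_fintype_card, ZMod.card]
  have hlower : n ≤ Nat.card {P : Set k // IsFieldOrdering P} := by
    have hle : Nat.card G ≤ Nat.card ({P : Set k // IsFieldOrdering P} → ℤˣ) :=
      Nat.card_le_card_of_injective Ψ hΨinj
    rw [hcard, Nat.card_fun, hcard2] at hle
    exact (Nat.pow_le_pow_iff_right one_lt_two).mp hle
  exact ⟨hlower, hupper⟩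
end

section
/- Let L be an algebraically closed field and let k ⊆ L be a subfield with [L : k] = 2. Then k has characteristic 0, k is real closed, and L = k(√−1). -/
open Module Polynomial

namespace AS
variable {k L : Type} [Field k] [Field L] [Algebra k L]

local notation "F" => algebraMap k L

lemma exists_not_mem (hdeg : finrank k L = 2) : ∃ x : L, x ∉ (F).range := by
  by_contra h
  push_neg at h
  have : (⊥ : Subalgebra k L) = ⊤ := by
    rw [eq_top_iff]
    intro x _
    exact (Algebra.mem_bot).2 (h x)
  rw [Subalgebra.bot_eq_top_iff_finrank_eq_one] at this
  omega

lemma coords (hdeg : finrank k L = 2) {x : L} (hx : x ∉ (F).range) (y : L) :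
    ∃ a b : k, y = F a + F b * x := by
  haveI : FiniteDimensional k L := Module.finite_of_finrank_eq_succ hdeg
  have hli : ¬ LinearIndependent k ![1, x, y] := by
    intro h
    have := h.fintype_card_le_finrank
    simp [hdeg] at this
  rw [Fintype.not_linearIndependent_iff] at hli
  obtain ⟨g, hg, j, hj⟩ := hli
  rw [Fin.sum_univ_three] at hg
  simp only [Matrix.cons_val_zero, Matrix.cons_val_one, Matrix.head_cons, smul_eq_mul,
    Matrix.cons_val_two, Matrix.tail_cons, Algebra.smul_def] at hg
  by_cases h2 : g 2 = 0
  · exfalso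
    rw [h2] at hg
    simp only [map_zero, zero_mul, add_zero, mul_one] at hg
    by_cases h1 : g 1 = 0
    · rw [h1] at hg
      simp at hg
      fin_cases j <;> simp_all
    · apply hx
      refine ⟨-(g 0) / (g 1), ?_⟩
      have hg1 : F (g 1) ≠ 0 := fun hc => h1 ((F).injective (by simpa using hc))
      rw [map_div₀, map_neg, div_eq_iff hg1]
      linear_combination -hg
  · refine ⟨-(g 0) / (g 2), -(g 1) / (g 2), ?_⟩
    have hg2 : F (g 2) ≠ 0 := fun hc => h2 ((F).injective (by simpa using hc))
    rw [map_div₀, map_div₀, map_neg, map_neg, div_mul_eq_mul_div, ← add_div, eq_div_iff hg2]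
    linear_combination hg

lemma coords_unique {x : L} (hx : x ∉ (F).range) {a b : k}
    (h : F a + F b * x = 0) : a = 0 ∧ b = 0 := by
  by_cases hb : b = 0
  · subst hb
    simp only [map_zero, zero_mul, add_zero] at h
    exact ⟨(F).injective (by simpa using h), rfl⟩
  · exfalso
    apply hx
    refine ⟨-a / b, ?_⟩
    have hFb : F b ≠ 0 := fun hc => hb ((F).injective (by simpa using hc))
    rw [map_div₀, map_neg, div_eq_iff hFb]
    linear_combination -h

lemma quad_root [IsAlgClosed L] (b c : L) : ∃ z : L, z ^ 2 + b * z + c = 0 := by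
  have hdeg : (C 1 * X ^ 2 + C b * X + C c).degree ≠ 0 := by
    rw [Polynomial.degree_quadratic one_ne_zero]
    decide
  obtain ⟨z, hz⟩ := IsAlgClosed.exists_root _ hdeg
  refine ⟨z, ?_⟩
  have := hz
  rw [IsRoot.def] at this
  simpa using this

lemma injF {a : k} (h : F a = 0) : a = 0 := (F).injective (by simpa using h)

lemma two_ne_zero (hdeg : finrank k L = 2) [IsAlgClosed L] : (2 : k) ≠ 0 := by
  intro h2
  have h2L : (2 : L) = 0 := by
    rw [show (2 : L) = F 2 from (map_ofNat _ 2).symm, h2, map_zero]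
  obtain ⟨α, hα⟩ := exists_not_mem hdeg
  obtain ⟨c, b, hbc⟩ := coords hdeg hα (α ^ 2)
  by_cases hb : b = 0
  · -- inseparable case : α ^ 2 = F c
    rw [hb, map_zero, zero_mul, add_zero] at hbc
    obtain ⟨β, hβ2⟩ := IsAlgClosed.exists_pow_nat_eq α (n := 2) (by norm_num)
    have hβ : β ∉ (F).range := by
      rintro ⟨u, rfl⟩
      exact hα ⟨u ^ 2, by rw [map_pow, hβ2]⟩
    obtain ⟨s, r, hA⟩ := coords hdeg hβ α
    have hr : r ≠ 0 := by
      rintro rfl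
      exact hα ⟨s, by simp at hA; exact hA.symm⟩
    have e1 : F r * β = α - F s := by linear_combination -hA
    have e2 : (F r * β) ^ 2 = (α - F s) ^ 2 := by rw [e1]
    have key : F (r ^ 2) * α = F (c + s ^ 2) := by
      rw [map_pow, map_add, map_pow]
      linear_combination e2 - (F r) ^ 2 * hβ2 + hbc - (F s * α) * h2L
    apply hα
    refine ⟨(c + s ^ 2) / r ^ 2, ?_⟩
    have hFr : F (r ^ 2) ≠ 0 := fun hc => (pow_ne_zero 2 hr) (injF hc)
    rw [map_div₀, div_eq_iff hFr]
    linear_combination -key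
  · -- separable case
    set α' : L := α * (F b)⁻¹ with hα'def
    have hFb : F b ≠ 0 := fun hc => hb (injF hc)
    have hα' : α' ∉ (F).range := by
      rintro ⟨u, hu⟩
      apply hα
      refine ⟨u * b, ?_⟩
      rw [map_mul, hu]
      rw [hα'def, mul_assoc, inv_mul_cancel₀ hFb, mul_one]
    set a : k := c / b ^ 2 with ha
    have key1 : α' ^ 2 = α' + F a := by
      rw [hα'def, ha, map_div₀, map_pow]
      field_simp
      linear_combination hbc
    obtain ⟨β, hβ⟩ := quad_root (-1 : L) (-(F a * α'))
    have hβ' : β ^ 2 = β + F a * α' := by linear_combination hβ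
    obtain ⟨u, v, huv⟩ := coords hdeg hα' β
    have expand : F (u ^ 2 + a * v ^ 2 - u) + F (2 * u * v + v ^ 2 - v - a) * α' = 0 := by
      have h1 : (F u + F v * α') ^ 2 = (F u + F v * α') + F a * α' := by rw [← huv]; exact hβ'
      push_cast [map_add, map_sub, map_mul, map_pow, map_ofNat]
      linear_combination h1 - (F v) ^ 2 * key1
    obtain ⟨hu1, hv1⟩ := coords_unique hα' expand
    have hv : v ^ 2 = v + a := by linear_combination hv1 - u * v * h2
    have hvL : (F v) ^ 2 = F v + F a := by
      rw [← map_pow, hv, map_add]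
    have hδ : (α' - F v) ^ 2 = α' - F v := by
      linear_combination key1 + hvL + (F v + F a - F v * α') * h2L
    have : (α' - F v) * ((α' - F v) - 1) = 0 := by linear_combination hδ
    rcases mul_eq_zero.1 this with h | h
    · exact hα' ⟨v, by linear_combination -h⟩
    · exact hα' ⟨v + 1, by rw [map_add, map_one]; linear_combination -h⟩

set_option linter.unusedSectionVars false in
lemma odd_root [IsAlgClosed L] (hdeg : finrank k L = 2) :
    ∀ n, Odd n → ∀ p : Polynomial k, p.natDegree = n → ∃ x : k, p.eval x = 0 := by
  haveI : FiniteDimensional k L := Module.finite_of_finrank_eq_succ hdeg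
  intro n
  induction n using Nat.strong_induction_on with
  | _ n ih =>
    intro hodd p hp
    have hn0 : n ≠ 0 := by rintro rfl; simp at hodd
    have hp0 : p ≠ 0 := by rintro rfl; simp at hp; omega
    have hmapdeg : (p.map F).natDegree = n := by
      rw [natDegree_map_eq_of_injective (F).injective, hp]
    have hd0 : (p.map F).degree ≠ 0 := by
      intro h
      have := natDegree_eq_zero_iff_degree_le_zero.mpr (le_of_eq h)
      omega
    obtain ⟨x, hx⟩ := IsAlgClosed.exists_root _ hd0
    have hax : aeval x p = 0 := by
      rw [IsRoot.def] at hx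
      rwa [aeval_def, ← eval_map]
    have hint : IsIntegral k x := IsIntegral.of_finite k x
    have hdvd : minpoly k x ∣ p := minpoly.dvd k x hax
    have hle : (minpoly k x).natDegree ≤ 2 := hdeg ▸ minpoly.natDegree_le x
    have hpos : 0 < (minpoly k x).natDegree := minpoly.natDegree_pos hint
    have hmp0 : minpoly k x ≠ 0 := minpoly.ne_zero hint
    rcases (by omega : (minpoly k x).natDegree = 1 ∨ (minpoly k x).natDegree = 2) with h1 | h2
    · obtain ⟨r, hr⟩ := minpoly.natDegree_eq_one_iff.mp h1
      refine ⟨r, ?_⟩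
      have : F (p.eval r) = 0 := by
        rw [← eval₂_at_apply, hr, ← aeval_def, hax]
      exact (F).injective (by simpa using this)
    · obtain ⟨q, hq⟩ := hdvd
      have hq0 : q ≠ 0 := by rintro rfl; rw [mul_zero] at hq; exact hp0 hq
      have hdq : p.natDegree = 2 + q.natDegree := by rw [hq, natDegree_mul hmp0 hq0, h2]
      obtain ⟨m, hm⟩ := hodd
      have hq_odd : Odd q.natDegree := ⟨m - 1, by omega⟩
      obtain ⟨y, hy⟩ := ih q.natDegree (by omega) hq_odd q rfl
      exact ⟨y, by rw [hq, eval_mul, hy, mul_zero]⟩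


end AS

/-- A field `k` is real closed if `-1` is not a square in `k`, every element of `k` is a
square or the negative of a square, and every polynomial of odd degree over `k` has a
root in `k`. -/
def IsRealClosedField (k : Type) [Field k] : Prop :=
  ¬ IsSquare (-1 : k) ∧ (∀ x : k, IsSquare x ∨ IsSquare (-x)) ∧
    ∀ p : Polynomial k, Odd p.natDegree → ∃ x : k, p.eval x = 0

/-- Let `L` be an algebraically closed field and `k ⊆ L` a subfield with `[L : k] = 2`.
Then `k` has characteristic 0, `k` is real closed, and `L = k(√−1)`. -/
theorem stmt_7 {k L : Type} [Field k] [Field L] [Algebra k L] [IsAlgClosed L]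
    (hdeg : Module.finrank k L = 2) :
    CharZero k ∧ IsRealClosedField k ∧
      ∃ i : L, i ^ 2 = -1 ∧ IntermediateField.adjoin k {i} = ⊤ := by
  have F := algebraMap k L
  clear F
  have h2k : (2 : k) ≠ 0 := AS.two_ne_zero hdeg
  obtain ⟨α, hα⟩ := AS.exists_not_mem hdeg
  obtain ⟨c, b, hbc⟩ := AS.coords hdeg hα (α ^ 2)
  -- complete the square
  set e : k := b / 2 with he_def
  have he : e + e = b := by rw [he_def]; field_simp; ring
  set γ : L := α - algebraMap k L e with hγ_def
  have hγ : γ ∉ (algebraMap k L).range := by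
    rintro ⟨u, hu⟩
    exact hα ⟨u + e, by rw [map_add, hu, hγ_def]; ring⟩
  set d : k := c + e ^ 2 with hd_def
  have heL : algebraMap k L e + algebraMap k L e = algebraMap k L b := by rw [← map_add, he]
  have hd : γ ^ 2 = algebraMap k L d := by
    rw [hγ_def, hd_def, map_add, map_pow]
    linear_combination hbc - α * heL
  have hdnsq : ∀ e' : k, d ≠ e' ^ 2 := by
    intro e' hde'
    have hFd : γ ^ 2 = (algebraMap k L e') ^ 2 := by rw [hd, hde', map_pow]
    have : (γ - algebraMap k L e') * (γ + algebraMap k L e') = 0 := by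
      linear_combination hFd
    rcases mul_eq_zero.1 this with h | h
    · exact hγ ⟨e', by linear_combination -h⟩
    · exact hγ ⟨-e', by rw [map_neg]; linear_combination -h⟩
  have hd0 : d ≠ 0 := by
    intro h
    have : γ ^ 2 = 0 := by rw [hd, h, map_zero]
    exact hγ ⟨0, by rw [map_zero]; exact (pow_eq_zero_iff (two_ne_zero)).1 this |>.symm⟩
  -- step 3 : -d is a square
  obtain ⟨t, ht2⟩ := IsAlgClosed.exists_pow_nat_eq γ (n := 2) (by norm_num)
  have ht : t ∉ (algebraMap k L).range := by
    rintro ⟨u, rfl⟩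
    exact hγ ⟨u ^ 2, by rw [map_pow, ht2]⟩
  obtain ⟨c', b', hc'⟩ := AS.coords hdeg ht (t ^ 2)
  have hb' : b' ≠ 0 := by
    rintro rfl
    refine hγ ⟨c', ?_⟩
    rw [← ht2, hc', map_zero, zero_mul, add_zero]
  have e2 : (algebraMap k L b' * t) ^ 2 = (t ^ 2 - algebraMap k L c') ^ 2 := by
    rw [show algebraMap k L b' * t = t ^ 2 - algebraMap k L c' by linear_combination -hc']
  have expand : algebraMap k L (-(d + c' ^ 2)) + algebraMap k L (b' ^ 2 + 2 * c') * γ = 0 := by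
    push_cast [map_neg, map_add, map_pow, map_mul, map_ofNat]
    linear_combination e2 - (algebraMap k L b') ^ 2 * ht2 + hd
      - (2 * algebraMap k L c') * ht2 + (t ^ 2 + γ) * ht2
  obtain ⟨hA, hB⟩ := AS.coords_unique hγ expand
  have hc0 : c' ^ 2 = -d := by linear_combination -hA
  have hc'0 : c' ≠ 0 := by
    intro h
    rw [h] at hc0
    exact hd0 (by linear_combination hc0)
  -- step 4 : -1 is not a square in k
  have hm1 : ¬ IsSquare (-1 : k) := by
    rintro ⟨j, hj⟩
    exact hdnsq (j * c') (by linear_combination (-(j ^ 2)) * hc0 - d * hj)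
  -- step 5 : every element is a square or minus a square
  have hsq : ∀ x : k, IsSquare x ∨ IsSquare (-x) := by
    intro x
    by_cases hx : IsSquare x
    · exact Or.inl hx
    right
    obtain ⟨s, hs⟩ := IsAlgClosed.exists_pow_nat_eq (algebraMap k L x) (n := 2) (by norm_num)
    have hsr : s ∉ (algebraMap k L).range := by
      rintro ⟨u, rfl⟩
      refine hx ⟨u, (algebraMap k L).injective ?_⟩
      rw [map_mul, ← hs]
      ring
    obtain ⟨p, q, hpq⟩ := AS.coords hdeg hγ s
    have hs' : (algebraMap k L p + algebraMap k L q * γ) ^ 2 = algebraMap k L x := by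
      rw [← hpq]; exact hs
    have expand2 : algebraMap k L (p ^ 2 + q ^ 2 * d - x)
        + algebraMap k L (2 * p * q) * γ = 0 := by
      push_cast [map_add, map_sub, map_pow, map_mul, map_ofNat]
      linear_combination hs' - (algebraMap k L q) ^ 2 * hd
    obtain ⟨h1, h2'⟩ := AS.coords_unique hγ expand2
    have hpq0 : p * q = 0 := by
      rcases mul_eq_zero.1 (show (2 : k) * (p * q) = 0 by linear_combination h2') with h | h
      · exact absurd h h2k
      · exact h
    rcases mul_eq_zero.1 hpq0 with hp | hq
    · exact ⟨q * c', by linear_combination h1 - p * hp - q ^ 2 * hc0⟩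
    · exact absurd (⟨p, by rw [hpq, hq, map_zero, zero_mul, add_zero]⟩ :
        s ∈ (algebraMap k L).range) hsr
  -- step 6 : i and k(i) = L
  set i : L := algebraMap k L c'⁻¹ * γ with hi_def
  have hk : (c'⁻¹) ^ 2 * d = -1 := by
    field_simp
    linear_combination hc0
  have hi2 : i ^ 2 = -1 := by
    rw [hi_def, mul_pow, hd, ← map_pow, ← map_mul, hk, map_neg, map_one]
  have hi_range : i ∉ (algebraMap k L).range := by
    rintro ⟨u, hu⟩
    refine hγ ⟨c' * u, ?_⟩
    have hFc' : algebraMap k L c' ≠ 0 := fun hcc =>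
      hc'0 ((algebraMap k L).injective (by simpa using hcc))
    rw [map_mul, hu, hi_def]
    rw [← mul_assoc, ← map_mul, mul_inv_cancel₀ hc'0, map_one, one_mul]
  have hadj : IntermediateField.adjoin k {i} = ⊤ := by
    rw [eq_top_iff]
    rintro x -
    obtain ⟨a', b'', hab⟩ := AS.coords hdeg hi_range x
    rw [hab]
    refine add_mem (IntermediateField.algebraMap_mem _ a') (mul_mem
      (IntermediateField.algebraMap_mem _ b'') (IntermediateField.subset_adjoin k {i} rfl))
  -- step 7 : sums of squares are squares, hence characteristic zero
  have sqsum : ∀ a₁ b₁ : k, IsSquare (a₁ ^ 2 + b₁ ^ 2) := by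
    intro a₁ b₁
    obtain ⟨w, hw⟩ := IsAlgClosed.exists_pow_nat_eq
      (algebraMap k L a₁ + algebraMap k L b₁ * i) (n := 2) (by norm_num)
    obtain ⟨x, y, hxy⟩ := AS.coords hdeg hi_range w
    have hw' : (algebraMap k L x + algebraMap k L y * i) ^ 2
        = algebraMap k L a₁ + algebraMap k L b₁ * i := by rw [← hxy]; exact hw
    have expand3 : algebraMap k L (x ^ 2 - y ^ 2 - a₁)
        + algebraMap k L (2 * x * y - b₁) * i = 0 := by
      push_cast [map_add, map_sub, map_pow, map_mul, map_ofNat]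
      linear_combination hw' - (algebraMap k L y) ^ 2 * hi2
    obtain ⟨h1, h2'⟩ := AS.coords_unique hi_range expand3
    exact ⟨x ^ 2 + y ^ 2,
      by linear_combination (-(a₁ + x ^ 2 - y ^ 2)) * h1 + (-(b₁ + 2 * x * y)) * h2'⟩
  have hnat : ∀ n : ℕ, IsSquare ((n : k)) := by
    intro n
    induction n with
    | zero => exact ⟨0, by simp⟩
    | succ n ih =>
      obtain ⟨r, hr⟩ := ih
      obtain ⟨m, hm⟩ := sqsum r 1
      refine ⟨m, ?_⟩
      push_cast
      rw [hr]
      linear_combination hm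
  have hchar : CharZero k := by
    rcases CharP.char_is_prime_or_zero k (ringChar k) with hp | h0
    · exfalso
      have hcast : ((ringChar k : ℕ) : k) = 0 := ringChar.spec k (ringChar k) |>.2 dvd_rfl
      have hm : ((ringChar k - 1 : ℕ) : k) = -1 := by
        rw [Nat.cast_sub hp.one_lt.le, hcast, Nat.cast_one]
        ring
      exact hm1 (hm ▸ hnat (ringChar k - 1))
    · have : CharP k 0 := h0 ▸ ringChar.charP k
      exact CharP.charP_to_charZero k
  exact ⟨hchar, ⟨hm1, hsq, fun p hodd => AS.odd_root hdeg p.natDegree hodd p rfl⟩,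
    ⟨i, hi2, hadj⟩⟩
end
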